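/- arXiv:1510.02716 — 3 statements merged into one kernel-verified Lean document; each statement's English description precedes it below -/
import Mathlib

section
/- Let G be a limit group (a finitely generated fully residually free group) and let A be a nontrivial abelian subgroup of G. Then there exists a unique subgroup M of G such that M is abelian, A ≤ M, and M is maximal among abelian subgroups of G (i.e., every abelian subgroup of G containing M equals M). -/
/-- A group `G` is fully residually free if for every finite subset `S` of `G` with `1 ∉ S`
there is a homomorphism to the free group on two generators that is nonvanishing on `S`. -/
def FullyResiduallyFree (G : Type*) [Group G] : Prop :=
  ∀ S : Finset G, (1 : G) ∉ S →
    ∃ h : G →* FreeGroup (Fin 2), ∀ s ∈ S, h s ≠ 1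

/-- Distinct generators of a free group do not commute. -/
lemma FreeGroup.noncomm_of {α : Type*} {a b : α} (hab : a ≠ b) :
    ¬ Commute (FreeGroup.of a : FreeGroup α) (FreeGroup.of b) := by
  intro h
  have hswap : Equiv.swap (0 : Fin 3) 1 * Equiv.swap 1 2 ≠
      Equiv.swap 1 2 * Equiv.swap (0 : Fin 3) 1 := by decide
  classical
  have h2 := h.map (FreeGroup.lift
    (fun x => if x = a then Equiv.swap (0 : Fin 3) 1 else Equiv.swap 1 2))
  have e1 : FreeGroup.lift
      (fun x => if x = a then Equiv.swap (0 : Fin 3) 1 else Equiv.swap 1 2)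
      (FreeGroup.of a) = Equiv.swap (0 : Fin 3) 1 :=
    (FreeGroup.lift_apply_of).trans (if_pos rfl)
  have e2 : FreeGroup.lift
      (fun x => if x = a then Equiv.swap (0 : Fin 3) 1 else Equiv.swap 1 2)
      (FreeGroup.of b) = Equiv.swap (1 : Fin 3) 2 :=
    (FreeGroup.lift_apply_of).trans (if_neg hab.symm)
  rw [e1, e2] at h2
  exact hswap h2

/-- The free group on a subsingleton type is "cyclic". -/
lemma FreeGroup.cyclic_of_subsingleton {α : Type*} [Subsingleton α] :
    ∃ z : FreeGroup α, ∀ g : FreeGroup α, ∃ n : ℤ, g = z ^ n := by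
  rcases isEmpty_or_nonempty α with h | ⟨⟨s⟩⟩
  · refine ⟨1, fun g => ⟨0, ?_⟩⟩
    induction g using FreeGroup.induction_on with
    | C1 => simp
    | of x => exact h.elim x
    | inv_of x _ => exact h.elim x
    | mul x y hx hy => rw [hx, hy]; simp
  · refine ⟨FreeGroup.of s, fun g => ?_⟩
    induction g using FreeGroup.induction_on with
    | C1 => exact ⟨0, by simp⟩
    | of x => exact ⟨1, by rw [Subsingleton.elim x s]; simp⟩
    | inv_of x _ => exact ⟨-1, by rw [Subsingleton.elim x s]; simp⟩
    | mul x y hx hy =>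
      obtain ⟨n, rfl⟩ := hx; obtain ⟨m, rfl⟩ := hy
      exact ⟨n + m, (zpow_add _ n m).symm⟩

/-- An abelian free group is cyclic. -/
lemma IsFreeGroup.cyclic_of_comm {G : Type*} [Group G] [IsFreeGroup G]
    (hab : ∀ x y : G, Commute x y) : ∃ z : G, ∀ g : G, ∃ n : ℤ, g = z ^ n := by
  let e := IsFreeGroup.toFreeGroup (G := G)
  have hsub : Subsingleton (IsFreeGroup.Generators G) := by
    rcases subsingleton_or_nontrivial (IsFreeGroup.Generators G) with h | h
    · exact h
    · obtain ⟨a, b, hne⟩ := h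
      exfalso
      apply FreeGroup.noncomm_of hne
      have := (hab (e.symm (FreeGroup.of a)) (e.symm (FreeGroup.of b))).map e.toMonoidHom
      simpa using this
  obtain ⟨z, hz⟩ := FreeGroup.cyclic_of_subsingleton (α := IsFreeGroup.Generators G)
  refine ⟨e.symm z, fun g => ?_⟩
  obtain ⟨n, hn⟩ := hz (e g)
  refine ⟨n, ?_⟩
  have := congrArg e.symm hn
  simpa using this

/-- A nontrivial central element in a free group on (at least) two distinct
generators is impossible. -/
lemma FreeGroup.central_eq_one {α : Type*} {a b : α} (hab : a ≠ b)
    {t : FreeGroup α} (ht : ∀ g, Commute t g) : t = 1 := by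
  classical
  let σ : FreeGroup α →* Multiplicative ℤ :=
    FreeGroup.lift (fun x => Multiplicative.ofAdd (if x = a then (1 : ℤ) else 0))
  let τ : FreeGroup α →* Multiplicative ℤ :=
    FreeGroup.lift (fun x => Multiplicative.ofAdd (if x = b then (1 : ℤ) else 0))
  have key : ∀ (c : α) (σc : FreeGroup α →* Multiplicative ℤ),
      (σc (FreeGroup.of c)).toAdd = 1 → ∃ m : ℤ, t = FreeGroup.of c ^ m := by
    intro c σc hc
    set H : Subgroup (FreeGroup α) := Subgroup.closure {t, FreeGroup.of c} with hH
    have htH : t ∈ H := Subgroup.subset_closure (by simp)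
    have hcH : FreeGroup.of c ∈ H := Subgroup.subset_closure (by simp)
    have habH : ∀ x y : H, Commute x y := by
      rintro ⟨x, hx⟩ ⟨y, hy⟩
      have hxy : Commute x y := by
        refine Subgroup.closure_induction₂ ?_ ?_ ?_ ?_ ?_ ?_ ?_ hx hy
        · intro u v hu hv
          simp only [Set.mem_insert_iff, Set.mem_singleton_iff] at hu hv
          rcases hu with rfl | rfl
          · exact ht v
          · rcases hv with rfl | rfl
            · exact (ht _).symm
            · exact Commute.refl _
        · exact fun u _ => Commute.one_left _
        · exact fun u _ => Commute.one_right _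
        · exact fun u v w _ _ _ h1 h2 => h1.mul_left h2
        · exact fun u v w _ _ _ h1 h2 => h1.mul_right h2
        · exact fun u v _ _ h1 => h1.inv_left
        · exact fun u v _ _ h1 => h1.inv_right
      exact Subtype.ext hxy
    obtain ⟨z, hz⟩ := IsFreeGroup.cyclic_of_comm habH
    obtain ⟨p, hp⟩ := hz ⟨t, htH⟩
    obtain ⟨q, hq⟩ := hz ⟨FreeGroup.of c, hcH⟩
    have hp' : t = (z : FreeGroup α) ^ p := by
      have := congrArg (Subtype.val) hp; simpa using this
    have hq' : FreeGroup.of c = (z : FreeGroup α) ^ q := by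
      have := congrArg (Subtype.val) hq; simpa using this
    have hq1 : q * (σc (z : FreeGroup α)).toAdd = 1 := by
      have := congrArg (fun w => (σc w).toAdd) hq'
      simpa [map_zpow] using this.symm.trans hc
    have hqpm : q = 1 ∨ q = -1 :=
      Int.isUnit_iff.mp (IsUnit.of_mul_eq_one _ hq1)
    rcases hqpm with rfl | rfl
    · refine ⟨p, ?_⟩
      rw [hp', show (z : FreeGroup α) = FreeGroup.of c by simpa using hq'.symm]
    · refine ⟨-p, ?_⟩
      have hz' : (z : FreeGroup α) = (FreeGroup.of c)⁻¹ := by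
        have := hq'.symm; rw [zpow_neg_one] at this
        rw [← this]; simp
      rw [hp', hz', inv_zpow']
  obtain ⟨m₁, hm₁⟩ := key a σ (by simp [σ, FreeGroup.lift_apply_of])
  obtain ⟨m₂, hm₂⟩ := key b τ (by simp [τ, FreeGroup.lift_apply_of])
  have h1 : (σ t).toAdd = m₁ := by
    rw [hm₁]; simp [σ, map_zpow, FreeGroup.lift_apply_of]
  have h2 : (σ t).toAdd = 0 := by
    rw [hm₂]; simp [σ, map_zpow, FreeGroup.lift_apply_of, if_neg (Ne.symm hab)]
  have hm0 : m₁ = 0 := h1.symm.trans h2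
  rw [hm₁, hm0, zpow_zero]


/-- A free group with a nontrivial central element is abelian. -/
lemma IsFreeGroup.comm_of_center {G : Type*} [Group G] [IsFreeGroup G]
    {t : G} (ht1 : t ≠ 1) (htc : ∀ g, Commute t g) (x y : G) : Commute x y := by
  let e := IsFreeGroup.toFreeGroup (G := G)
  rcases subsingleton_or_nontrivial (IsFreeGroup.Generators G) with h | h
  · obtain ⟨z, hz⟩ := FreeGroup.cyclic_of_subsingleton (α := IsFreeGroup.Generators G)
    obtain ⟨n, hn⟩ := hz (e x)
    obtain ⟨m, hm⟩ := hz (e y)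
    have hc : Commute (e x) (e y) := by
      rw [hn, hm]
      exact (Commute.refl z).zpow_zpow n m
    have := hc.map e.symm.toMonoidHom
    simpa using this
  · obtain ⟨a, b, hne⟩ := h
    have het : (e t) = 1 := FreeGroup.central_eq_one hne (fun g => by
      simpa using (htc (e.symm g)).map e.toMonoidHom)
    exact absurd (by simpa using congrArg e.symm het) ht1

/-- Commutative transitivity in free groups. -/
lemma FreeGroup.commute_trans {α : Type*} {a b c : FreeGroup α} (hb : b ≠ 1)
    (hab : Commute a b) (hbc : Commute b c) : Commute a c := by
  set H : Subgroup (FreeGroup α) := Subgroup.closure {a, b, c} with hH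
  have haH : a ∈ H := Subgroup.subset_closure (by simp)
  have hbH : b ∈ H := Subgroup.subset_closure (by simp)
  have hcH : c ∈ H := Subgroup.subset_closure (by simp)
  have hbcen : ∀ g : H, Commute (⟨b, hbH⟩ : H) g := by
    rintro ⟨g, hg⟩
    have hcom : Commute b g := by
      refine Subgroup.closure_induction ?_ ?_ ?_ ?_ hg
      · intro u hu
        simp only [Set.mem_insert_iff, Set.mem_singleton_iff] at hu
        rcases hu with rfl | rfl | rfl
        · exact hab.symm
        · exact Commute.refl _
        · exact hbc
      · exact Commute.one_right _
      · exact fun u v _ _ h1 h2 => h1.mul_right h2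
      · exact fun u _ h1 => h1.inv_right
    exact Subtype.ext hcom
  have ht1 : (⟨b, hbH⟩ : H) ≠ 1 := fun h => hb (congrArg Subtype.val h)
  have := IsFreeGroup.comm_of_center ht1 hbcen ⟨a, haH⟩ ⟨c, hcH⟩
  exact congrArg Subtype.val this

/-- Commutative transitivity in fully residually free groups. -/
lemma FullyResiduallyFree.commute_trans {G : Type*} [Group G]
    (hfrf : FullyResiduallyFree G) {a b c : G} (hb : b ≠ 1)
    (hab : Commute a b) (hbc : Commute b c) : Commute a c := by
  classical
  by_contra hac
  have hk : a * c * a⁻¹ * c⁻¹ ≠ 1 := by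
    intro h
    apply hac
    have h1 : a * c * a⁻¹ = c := mul_inv_eq_one.mp h
    rw [mul_inv_eq_iff_eq_mul] at h1
    exact h1
  obtain ⟨h, hh⟩ := hfrf {b, a * c * a⁻¹ * c⁻¹} (by
    simp only [Finset.mem_insert, Finset.mem_singleton]
    rintro (h1 | h1)
    · exact hb h1.symm
    · exact hk h1.symm)
  have hhb : h b ≠ 1 := hh b (by simp)
  have hhk : h (a * c * a⁻¹ * c⁻¹) ≠ 1 := hh _ (by simp)
  have hCT : Commute (h a) (h c) :=
    FreeGroup.commute_trans hhb (hab.map h) (hbc.map h)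
  apply hhk
  simp only [map_mul, map_inv]
  rw [hCT.eq]
  group

/-- In a limit group, every nontrivial abelian subgroup is contained in a unique
maximal abelian subgroup. -/
theorem limit_group_unique_maximal_abelian (G : Type*) [Group G]
    (hfg : Group.FG G) (hfrf : FullyResiduallyFree G)
    (A : Subgroup G) (hA : A ≠ ⊥)
    (hAab : ∀ x ∈ A, ∀ y ∈ A, x * y = y * x) :
    ∃! M : Subgroup G,
      (∀ x ∈ M, ∀ y ∈ M, x * y = y * x) ∧ A ≤ M ∧
        ∀ N : Subgroup G, (∀ x ∈ N, ∀ y ∈ N, x * y = y * x) → M ≤ N → N = M := by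
  obtain ⟨⟨a, haA⟩, ha1⟩ := Subgroup.ne_bot_iff_exists_ne_one.mp hA
  have ha1' : a ≠ 1 := fun h => ha1 (Subtype.ext h)
  set M := Subgroup.centralizer ({a} : Set G) with hMdef
  have hmem : ∀ g : G, g ∈ M ↔ a * g = g * a := fun g => by
    rw [hMdef, Subgroup.mem_centralizer_singleton_iff, eq_comm]
  have hMab : ∀ x ∈ M, ∀ y ∈ M, x * y = y * x := by
    intro x hx y hy
    rw [hmem] at hx hy
    exact (hfrf.commute_trans ha1' (Commute.symm hx) hy).eq
  have hAM : A ≤ M := by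
    intro y hy
    rw [hmem]
    exact hAab a haA y hy
  have haM : a ∈ M := (hmem a).mpr rfl
  have hMmax : ∀ N : Subgroup G, (∀ x ∈ N, ∀ y ∈ N, x * y = y * x) → M ≤ N → N = M := by
    intro N hNab hMN
    refine le_antisymm (fun n hn => ?_) hMN
    rw [hmem]
    exact hNab a (hMN haM) n hn
  refine ⟨M, ⟨hMab, hAM, hMmax⟩, ?_⟩
  rintro M' ⟨hM'ab, hAM', hM'max⟩
  have hle : M' ≤ M := by
    intro m hm
    rw [hmem]
    exact hM'ab a (hAM' haA) m hm
  exact (hM'max M hMab hle).symm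
end

section
/- Let G be a fully residually free group and let g be an element of G with g ≠ 1. Then the centralizer of g in G is an abelian subgroup of G. -/
section Aux

open Subgroup

/-- Distinct generators of a free group do not commute. -/
lemma FreeGroupCT.of_commute_eq {κ : Type*} {i j : κ}
    (h : Commute (FreeGroup.of i) (FreeGroup.of j)) : i = j := by
  classical
  by_contra hij
  set A : Equiv.Perm (Fin 3) := Equiv.swap 0 1 with hA
  set B : Equiv.Perm (Fin 3) := Equiv.swap 1 2 with hB
  set f : κ → Equiv.Perm (Fin 3) := fun k => if k = i then A else B with hf
  have h2 : A * B = B * A := by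
    have := congrArg (FreeGroup.lift f) h.eq
    simpa [hf, FreeGroup.lift_apply_of, Ne.symm hij] using this
  have h3 : (A * B) 0 = (B * A) 0 := by rw [h2]
  simp [hA, hB, Equiv.swap_apply_def] at h3

/-- The closure of a set of pairwise commuting elements is commutative. -/
lemma FreeGroupCT.closure_commute {G : Type*} [Group G] {s : Set G}
    (hs : ∀ a ∈ s, ∀ b ∈ s, Commute a b) :
    ∀ x ∈ Subgroup.closure s, ∀ y ∈ Subgroup.closure s, Commute x y := by
  intro x hx y hy
  induction hx, hy using Subgroup.closure_induction₂ with
  | mem a b ha hb => exact hs a ha b hb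
  | one_left x hx => exact Commute.one_left _
  | one_right x hx => exact Commute.one_right _
  | mul_left _ _ _ _ _ _ h1 h2 => exact h1.mul_left h2
  | mul_right _ _ _ _ _ _ h1 h2 => exact h1.mul_right h2
  | inv_left _ _ _ _ h => exact h.inv_left
  | inv_right _ _ _ _ h => exact h.inv_right

/-- Two commuting elements of a free group lie in a common cyclic subgroup. -/
lemma FreeGroupCT.exists_zpowers {G : Type*} [Group G] [IsFreeGroup G] {u v : G}
    (h : Commute u v) :
    ∃ s : G, u ∈ Subgroup.zpowers s ∧ v ∈ Subgroup.zpowers s := by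
  classical
  set H : Subgroup G := Subgroup.closure {u, v} with hH
  have hu : u ∈ H := Subgroup.subset_closure (Set.mem_insert _ _)
  have hv : v ∈ H := Subgroup.subset_closure (Set.mem_insert_of_mem _ rfl)
  have hs : ∀ a ∈ ({u, v} : Set G), ∀ b ∈ ({u, v} : Set G), Commute a b := by
    intro a ha b hb
    simp only [Set.mem_insert_iff, Set.mem_singleton_iff] at ha hb
    rcases ha with rfl | rfl <;> rcases hb with rfl | rfl
    exacts [Commute.refl _, h, h.symm, Commute.refl _]
  have hcomm := FreeGroupCT.closure_commute hs
  let e : H ≃* FreeGroup (IsFreeGroup.Generators H) := IsFreeGroup.toFreeGroup H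
  have hFcomm : ∀ p q : FreeGroup (IsFreeGroup.Generators H), Commute p q := by
    intro p q
    have h1 : Commute ((e.symm p : H) : G) ((e.symm q : H) : G) :=
      hcomm _ (e.symm p).2 _ (e.symm q).2
    have h2 : e.symm p * e.symm q = e.symm q * e.symm p := Subtype.ext h1.eq
    have h3 := congrArg e h2
    exact (by simpa [map_mul] using h3 : p * q = q * p)
  have hsub : Subsingleton (IsFreeGroup.Generators H) :=
    ⟨fun i j => FreeGroupCT.of_commute_eq (hFcomm _ _)⟩
  rcases isEmpty_or_nonempty (IsFreeGroup.Generators H) with hE | hNe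
  · -- the free group is trivial, so u = v = 1
    have htriv : ∀ w : FreeGroup (IsFreeGroup.Generators H), w = 1 := by
      intro w
      have hw : w ∈ Subgroup.closure (Set.range FreeGroup.of) := by
        rw [FreeGroup.closure_range_of]; trivial
      rwa [Set.range_eq_empty, Subgroup.closure_empty, Subgroup.mem_bot] at hw
    have hu1 : u = 1 := by
      have : (⟨u, hu⟩ : H) = 1 := e.injective (by rw [htriv (e ⟨u, hu⟩), map_one])
      exact congrArg Subtype.val this
    have hv1 : v = 1 := by
      have : (⟨v, hv⟩ : H) = 1 := e.injective (by rw [htriv (e ⟨v, hv⟩), map_one])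
      exact congrArg Subtype.val this
    exact ⟨1, by simp [hu1, hv1]⟩
  · obtain ⟨i₀⟩ := hNe
    have htop : ∀ w : FreeGroup (IsFreeGroup.Generators H),
        w ∈ Subgroup.zpowers (FreeGroup.of i₀) := by
      intro w
      have hw : w ∈ Subgroup.closure (Set.range FreeGroup.of) := by
        rw [FreeGroup.closure_range_of]; trivial
      have hr : Set.range (FreeGroup.of : _ → FreeGroup (IsFreeGroup.Generators H))
          = {FreeGroup.of i₀} := by
        ext w'
        constructor
        · rintro ⟨j, rfl⟩; rw [Subsingleton.elim j i₀]; rfl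
        · rintro rfl; exact ⟨i₀, rfl⟩
      rwa [hr, ← Subgroup.zpowers_eq_closure] at hw
    refine ⟨(e.symm (FreeGroup.of i₀) : H), ?_, ?_⟩
    · obtain ⟨k, hk⟩ := Subgroup.mem_zpowers_iff.mp (htop (e ⟨u, hu⟩))
      refine Subgroup.mem_zpowers_iff.mpr ⟨k, ?_⟩
      have h4 : e.symm (FreeGroup.of i₀) ^ k = (⟨u, hu⟩ : H) := by
        have := congrArg e.symm hk
        simpa [map_zpow] using this
      calc ((e.symm (FreeGroup.of i₀) : H) : G) ^ k
          = ((e.symm (FreeGroup.of i₀) ^ k : H) : G) := by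
            rw [SubgroupClass.coe_zpow]
        _ = u := by rw [h4]
    · obtain ⟨k, hk⟩ := Subgroup.mem_zpowers_iff.mp (htop (e ⟨v, hv⟩))
      refine Subgroup.mem_zpowers_iff.mpr ⟨k, ?_⟩
      have h4 : e.symm (FreeGroup.of i₀) ^ k = (⟨v, hv⟩ : H) := by
        have := congrArg e.symm hk
        simpa [map_zpow] using this
      calc ((e.symm (FreeGroup.of i₀) : H) : G) ^ k
          = ((e.symm (FreeGroup.of i₀) ^ k : H) : G) := by
            rw [SubgroupClass.coe_zpow]
        _ = v := by rw [h4]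

/-- A central element of a free group is an integer power of each generator. -/
lemma FreeGroupCT.central_pow {κ : Type*} {z : FreeGroup κ}
    (hz : ∀ w, Commute z w) (i : κ) :
    ∃ k : ℤ, FreeGroup.of i ^ k = z := by
  classical
  obtain ⟨s, hzs, his⟩ := FreeGroupCT.exists_zpowers (hz (FreeGroup.of i))
  obtain ⟨m, hm⟩ := Subgroup.mem_zpowers_iff.mp his
  obtain ⟨k, hk⟩ := Subgroup.mem_zpowers_iff.mp hzs
  set φ : FreeGroup κ →* Multiplicative ℤ :=
    FreeGroup.lift (fun l => Multiplicative.ofAdd (if l = i then (1 : ℤ) else 0)) with hφ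
  have h1 : m * Multiplicative.toAdd (φ s) = 1 := by
    have := congrArg (fun w => Multiplicative.toAdd (φ w)) hm
    simpa [hφ, map_zpow, toAdd_zpow, smul_eq_mul, FreeGroup.lift_apply_of] using this
  have hm1 : m = 1 ∨ m = -1 := Int.isUnit_iff.mp (IsUnit.of_mul_eq_one _ h1)
  rcases hm1 with rfl | rfl
  · rw [zpow_one] at hm
    exact ⟨k, by rw [← hm, hk]⟩
  · rw [zpow_neg, zpow_one] at hm
    refine ⟨-k, ?_⟩
    rw [← hm, zpow_neg, ← inv_zpow, inv_inv, hk]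

/-- A free group on at least two generators has trivial center. -/
lemma FreeGroupCT.central_eq_one {κ : Type*} {z : FreeGroup κ}
    (hz : ∀ w, Commute z w) {i j : κ} (hij : i ≠ j) : z = 1 := by
  classical
  obtain ⟨k, hk⟩ := FreeGroupCT.central_pow hz i
  obtain ⟨l, hl⟩ := FreeGroupCT.central_pow hz j
  set φ : FreeGroup κ →* Multiplicative ℤ :=
    FreeGroup.lift (fun l => Multiplicative.ofAdd (if l = i then (1 : ℤ) else 0)) with hφ
  have h1 : Multiplicative.toAdd (φ z) = k := by
    rw [← hk]
    simp [hφ, map_zpow, toAdd_zpow, smul_eq_mul, FreeGroup.lift_apply_of]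
  have h2 : Multiplicative.toAdd (φ z) = 0 := by
    rw [← hl]
    simp [hφ, map_zpow, toAdd_zpow, smul_eq_mul, FreeGroup.lift_apply_of, Ne.symm hij]
  have hk0 : k = 0 := by rw [← h1, h2]
  rw [← hk, hk0, zpow_zero]

/-- Commutation is transitive in a free group: the key commutative transitivity property. -/
lemma FreeGroupCT.ct {κ : Type*} {a x y : FreeGroup κ} (ha : a ≠ 1)
    (hx : Commute x a) (hy : Commute y a) : Commute x y := by
  set C := Subgroup.centralizer ({a} : Set (FreeGroup κ)) with hC
  have hmem : ∀ {w : FreeGroup κ}, Commute w a → w ∈ C := by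
    intro w hw
    refine Subgroup.mem_centralizer_iff.mpr ?_
    rintro b rfl'
    rcases rfl' with rfl
    exact hw.symm.eq
  have haC : a ∈ C := hmem (Commute.refl a)
  have hxC : x ∈ C := hmem hx
  have hyC : y ∈ C := hmem hy
  let e : C ≃* FreeGroup (IsFreeGroup.Generators C) := IsFreeGroup.toFreeGroup C
  have hcent : ∀ w, Commute (e ⟨a, haC⟩) w := by
    intro w
    obtain ⟨c, rfl⟩ := e.surjective w
    have h0 : (a : FreeGroup κ) * (c : C) = (c : C) * a :=
      Subgroup.mem_centralizer_iff.mp c.2 a rfl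
    have h1 : (⟨a, haC⟩ : C) * c = c * ⟨a, haC⟩ := Subtype.ext h0
    show e ⟨a, haC⟩ * e c = e c * e ⟨a, haC⟩
    rw [← map_mul, ← map_mul, h1]
  rcases subsingleton_or_nontrivial (IsFreeGroup.Generators C) with hS | hN
  · have hall : ∀ p q : FreeGroup (IsFreeGroup.Generators C), Commute p q := by
      intro p q
      have hp : p ∈ Subgroup.closure (Set.range FreeGroup.of) := by
        rw [FreeGroup.closure_range_of]; trivial
      have hq : q ∈ Subgroup.closure (Set.range FreeGroup.of) := by
        rw [FreeGroup.closure_range_of]; trivial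
      refine FreeGroupCT.closure_commute ?_ p hp q hq
      rintro _ ⟨i, rfl⟩ _ ⟨j, rfl⟩
      rw [Subsingleton.elim i j]
      exact Commute.refl _
    have h1 := hall (e ⟨x, hxC⟩) (e ⟨y, hyC⟩)
    have h2 : (⟨x, hxC⟩ : C) * ⟨y, hyC⟩ = ⟨y, hyC⟩ * ⟨x, hxC⟩ :=
      e.injective (by rw [map_mul, map_mul, h1.eq])
    exact congrArg Subtype.val h2
  · obtain ⟨i, j, hij⟩ := hN.exists_pair_ne
    have hz1 : e ⟨a, haC⟩ = 1 := FreeGroupCT.central_eq_one hcent hij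
    have h2 : (⟨a, haC⟩ : C) = 1 := e.injective (by rw [hz1, map_one])
    exact absurd (congrArg Subtype.val h2) ha

end Aux

/-- In a fully residually free group, the centralizer of a nontrivial element is abelian. -/
theorem fully_residually_free_centralizer_abelian (G : Type*) [Group G]
    (hfrf : FullyResiduallyFree G) (g : G) (hg : g ≠ 1) :
    ∀ x ∈ Subgroup.centralizer {g}, ∀ y ∈ Subgroup.centralizer {g},
      x * y = y * x := by
  classical
  intro x hx y hy
  by_contra hne
  have hc : x * y * (y * x)⁻¹ ≠ 1 := by
    intro h
    exact hne (by rwa [mul_inv_eq_one] at h)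
  have h1mem : (1 : G) ∉ ({g, x * y * (y * x)⁻¹} : Finset G) := by
    intro hmem
    rcases Finset.mem_insert.mp hmem with h1 | h1
    · exact hg h1.symm
    · exact hc (Finset.mem_singleton.mp h1).symm
  obtain ⟨h, hS⟩ := hfrf {g, x * y * (y * x)⁻¹} h1mem
  have hg' : h g ≠ 1 := hS g (Finset.mem_insert_self _ _)
  have hc' : h (x * y * (y * x)⁻¹) ≠ 1 :=
    hS _ (Finset.mem_insert.mpr (Or.inr (Finset.mem_singleton_self _)))
  have hxg : Commute (h x) (h g) := by
    have h0 : g * x = x * g := Subgroup.mem_centralizer_iff.mp hx g rfl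
    show h x * h g = h g * h x
    rw [← map_mul, ← map_mul, h0]
  have hyg : Commute (h y) (h g) := by
    have h0 : g * y = y * g := Subgroup.mem_centralizer_iff.mp hy g rfl
    show h y * h g = h g * h y
    rw [← map_mul, ← map_mul, h0]
  have hCT : Commute (h x) (h y) := FreeGroupCT.ct hg' hxg hyg
  apply hc'
  rw [map_mul, map_inv, map_mul, map_mul, hCT.eq, mul_inv_cancel]
end

section
/- Let G be a limit group (a finitely generated fully residually free group) having no subgroup isomorphic to ℤ × ℤ. Let a, b ∈ G be elements with a ≠ 1 and b ≠ 1, neither of which is a proper power (i.e., for every x ∈ G and integer n, a = xⁿ implies n = 1 or n = −1, and likewise for b), and suppose a is conjugate in G to neither b nor b⁻¹. Then for all x, y ∈ G, the intersection of the conjugate subgroups x⁻¹⟨a⟩x and y⁻¹⟨b⟩y is trivial. -/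
open FreeGroup in
lemma myreduce_cons_of_ne {α : Type*} [DecidableEq α] {L : List (α × Bool)} (x : α × Bool)
    (hred : reduce L = L) (h : ∀ y ∈ L.head?, ¬(x.1 = y.1 ∧ x.2 = !y.2)) :
    reduce (x :: L) = x :: L := by
  rw [FreeGroup.reduce.cons, hred]
  cases L with
  | nil => rfl
  | cons y ys =>
    simp only [List.head?_cons, Option.mem_some_iff, forall_eq] at h
    simp [if_neg (h y rfl)]

open FreeGroup in
lemma myreduce_cons_cancel {α : Type*} [DecidableEq α] {a : α} {s : Bool} {M : List (α × Bool)}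
    (hred : reduce ((a, s) :: M) = (a, s) :: M) :
    reduce ((a, !s) :: (a, s) :: M) = M := by
  rw [FreeGroup.reduce.cons, hred]
  simp

open FreeGroup in
/-- Strip the leading letter of a reduced word. -/
lemma mystrip {α : Type*} [DecidableEq α] {i : α} {s : Bool} {M : List (α × Bool)}
    {z : FreeGroup α} (h : z.toWord = (i, s) :: M) :
    ∃ ε z' : FreeGroup α, (ε = of i ∨ ε = (of i)⁻¹) ∧ z = ε * z' ∧ z'.toWord = M := by
  refine ⟨mk [(i, s)], mk [(i, !s)] * z, ?_, ?_, ?_⟩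
  · cases s
    · right
      rw [show of i = mk [(i, true)] from rfl, FreeGroup.inv_mk]
      rfl
    · left; rfl
  · have : mk [(i, s)] * mk [(i, !s)] = 1 := by
      rw [FreeGroup.mul_mk]
      apply FreeGroup.toWord_injective
      rw [FreeGroup.toWord_mk, FreeGroup.toWord_one]
      simp [FreeGroup.reduce.cons]
    rw [← mul_assoc, this, one_mul]
  · conv_lhs => rw [← FreeGroup.mk_toWord (x := z)]
    rw [FreeGroup.mul_mk, FreeGroup.toWord_mk, List.singleton_append, h]
    have hred : reduce ((i, s) :: M) = (i, s) :: M := by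
      rw [← h]; exact z.reduce_toWord
    exact myreduce_cons_cancel hred

open FreeGroup in
lemma mycomm_of_imp_pow {α : Type*} [DecidableEq α] (i : α) :
    ∀ (n : ℕ) (z : FreeGroup α), z.toWord.length = n → Commute z (of i) →
      ∃ k : ℤ, z = of i ^ k := by
  intro n
  induction n using Nat.strong_induction_on with
  | _ n IH =>
    intro z hn hz
    cases hL : z.toWord with
    | nil =>
      exact ⟨0, by rw [zpow_zero]; exact FreeGroup.toWord_eq_nil_iff.mp hL⟩
    | cons hd M =>
      obtain ⟨a, s⟩ := hd
      by_cases hai : a = i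
      · subst hai
        obtain ⟨ε, z', hε, hze, hM⟩ := mystrip hL
        have hlen : M.length < n := by
          rw [hL] at hn; simp at hn; omega
        have hz' : Commute z' (of a) := by
          have : z' = ε⁻¹ * z := by rw [hze, ← mul_assoc, inv_mul_cancel, one_mul]
          rw [this]
          have hcε : Commute ε (of a) := by
            rcases hε with h | h <;> subst h
            exacts [Commute.refl _, (Commute.refl _).inv_left]
          exact hcε.inv_left.mul_left hz
        obtain ⟨k, hk⟩ := IH M.length hlen z' (by rw [hM]) hz'
        rcases hε with h | h
        · exact ⟨k + 1, by rw [hze, hk, h]; group⟩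
        · exact ⟨k - 1, by rw [hze, hk, h]; group⟩
      · have hz1 : z ≠ 1 := by
          intro h1; rw [h1, FreeGroup.toWord_one] at hL; exact List.cons_ne_nil _ _ hL.symm
        cases hLu : z⁻¹.toWord with
        | nil =>
          exact absurd (inv_eq_one.mp (FreeGroup.toWord_eq_nil_iff.mp hLu)) hz1
        | cons hd' M' =>
          obtain ⟨c, t⟩ := hd'
          by_cases hci : c = i
          · subst hci
            obtain ⟨ε, u', hε, hze, hM⟩ := mystrip hLu
            have hlen : M'.length < n := by
              have : z⁻¹.toWord.length = n := by
                rw [FreeGroup.toWord_inv, FreeGroup.invRev_length, hn]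
              rw [hLu] at this; simp at this; omega
            have hu' : Commute u' (of c) := by
              have : u' = ε⁻¹ * z⁻¹ := by rw [hze, ← mul_assoc, inv_mul_cancel, one_mul]
              rw [this]
              have hcε : Commute ε (of c) := by
                rcases hε with h | h <;> subst h
                exacts [Commute.refl _, (Commute.refl _).inv_left]
              exact hcε.inv_left.mul_left hz.inv_left
            obtain ⟨k, hk⟩ := IH M'.length hlen u' (by rw [hM]) hu'
            rcases hε with h | h
            · exact ⟨-k - 1, by rw [← inv_inv z, hze, hk, h]; group⟩
            · exact ⟨-k + 1, by rw [← inv_inv z, hze, hk, h]; group⟩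
          · exfalso
            have h1 : (of i * z).toWord = (i, true) :: z.toWord := by
              conv_lhs => rw [← FreeGroup.mk_toWord (x := z),
                show of i = mk [(i, true)] from rfl, FreeGroup.mul_mk]
              rw [List.singleton_append, FreeGroup.toWord_mk]
              refine myreduce_cons_of_ne _ z.reduce_toWord ?_
              intro y hy
              rw [hL] at hy
              simp only [List.head?_cons, Option.mem_some_iff] at hy
              subst hy
              rintro ⟨h1, -⟩
              exact hai h1.symm
            have hinv : (of i)⁻¹ = mk [(i, false)] := by
              rw [show of i = mk [(i, true)] from rfl, FreeGroup.inv_mk]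
              rfl
            have e1 : ((of i)⁻¹ * z⁻¹).toWord = (i, false) :: z⁻¹.toWord := by
              conv_lhs => rw [← FreeGroup.mk_toWord (x := z⁻¹), hinv, FreeGroup.mul_mk]
              rw [List.singleton_append, FreeGroup.toWord_mk]
              refine myreduce_cons_of_ne _ z⁻¹.reduce_toWord ?_
              intro y hy
              rw [hLu] at hy
              simp only [List.head?_cons, Option.mem_some_iff] at hy
              subst hy
              rintro ⟨h1, -⟩
              exact hci h1.symm
            have h2 : (z * of i).toWord = z.toWord ++ [(i, true)] := by
              calc (z * of i).toWord = (((of i)⁻¹ * z⁻¹)⁻¹).toWord := by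
                    simp only [mul_inv_rev, inv_inv]
                _ = FreeGroup.invRev ((of i)⁻¹ * z⁻¹).toWord := FreeGroup.toWord_inv _
                _ = FreeGroup.invRev ((i, false) :: z⁻¹.toWord) := by rw [e1]
                _ = z.toWord ++ [(i, true)] := by
                    rw [FreeGroup.toWord_inv]
                    simp [FreeGroup.invRev, List.map_reverse, Function.comp_def]
            have heq : (i, true) :: z.toWord = z.toWord ++ [(i, true)] := by
              rw [← h1, ← h2, hz.eq]
            rw [hL] at heq
            simp only [List.cons_append, List.cons.injEq, Prod.mk.injEq] at heq
            exact hai heq.1.1.symm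

open FreeGroup in
lemma myall_one {α : Type*} (hα : ¬ Nonempty α) (g : FreeGroup α) : g = 1 := by
  induction g with
  | C1 => rfl
  | of x => exact (hα ⟨x⟩).elim
  | inv_of x _ => exact (hα ⟨x⟩).elim
  | mul x y hx hy => rw [hx, hy, one_mul]

open FreeGroup in
lemma mypow_head {α : Type*} [DecidableEq α] (j : α) (k : ℤ) (hk : k ≠ 0) :
    ∃ (b : Bool) (n : ℕ), n ≠ 0 ∧ (of j ^ k).toWord = List.replicate n (j, b) := by
  obtain ⟨n, rfl | rfl⟩ := k.eq_nat_or_neg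
  · refine ⟨true, n, by simpa using hk, ?_⟩
    rw [zpow_natCast, FreeGroup.toWord_of_pow]
  · refine ⟨false, n, by simpa using hk, ?_⟩
    rw [zpow_neg, zpow_natCast, FreeGroup.toWord_inv, FreeGroup.toWord_of_pow]
    simp [FreeGroup.invRev]

open FreeGroup in
lemma myeq_of_powers {α : Type*} [DecidableEq α] {z : FreeGroup α} (hz : z ≠ 1) {i j : α}
    {k l : ℤ} (hi : z = of i ^ k) (hj : z = of j ^ l) : i = j := by
  have hk : k ≠ 0 := by rintro rfl; rw [zpow_zero] at hi; exact hz hi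
  have hl : l ≠ 0 := by rintro rfl; rw [zpow_zero] at hj; exact hz hj
  obtain ⟨b, n, hn, hw⟩ := mypow_head i k hk
  obtain ⟨b', m, hm, hw'⟩ := mypow_head j l hl
  rw [← hi] at hw; rw [← hj] at hw'
  have := hw.symm.trans hw'
  cases n with
  | zero => exact absurd rfl hn
  | succ n =>
    cases m with
    | zero => exact absurd rfl hm
    | succ m =>
      simp only [List.replicate_succ, List.cons.injEq, Prod.mk.injEq] at this
      exact this.1.1

open FreeGroup in
lemma mykey {β : Type*} (v : FreeGroup β) (hv : v ≠ 1) :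
    (∀ u w : FreeGroup β, Commute v u → Commute v w → Commute u w) ∧
      (∀ n : ℤ, v ^ n = 1 → n = 0) := by
  classical
  set K := Subgroup.centralizer ({v} : Set (FreeGroup β)) with hK
  have hmem : ∀ g : FreeGroup β, Commute v g → g ∈ K := by
    intro g hg
    rw [hK, Subgroup.mem_centralizer_iff]
    intro h hh
    rw [Set.mem_singleton_iff] at hh
    subst hh
    exact hg.eq
  have hvK : v ∈ K := hmem v (Commute.refl v)
  set J := IsFreeGroup.Generators ↥K with hJ
  letI : DecidableEq J := Classical.decEq J
  set e : ↥K ≃* FreeGroup J := IsFreeGroup.toFreeGroup ↥K with he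
  set v₀ : ↥K := ⟨v, hvK⟩ with hv₀
  set z : FreeGroup J := e v₀ with hz
  have hz1 : z ≠ 1 := by
    intro h
    have : v₀ = 1 := e.injective (by rw [← hz, h, _root_.map_one])
    exact hv (by simpa [hv₀, Subtype.ext_iff] using this)
  have hcentral : ∀ g : FreeGroup J, Commute z g := by
    intro g
    have hk : ∀ k : ↥K, Commute v₀ k := by
      intro k
      have := k.2 v (Set.mem_singleton v)
      exact Subtype.ext (by simpa using this)
    have := (hk (e.symm g)).map e.toMonoidHom
    simpa using this
  have hpow : ∀ j : J, ∃ k : ℤ, z = FreeGroup.of j ^ k := by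
    intro j
    exact mycomm_of_imp_pow j z.toWord.length z rfl (hcentral (FreeGroup.of j))
  constructor
  · intro u w hu hw
    -- all elements of K commute
    have hsing : ∀ i j : J, i = j := by
      intro i j
      obtain ⟨k, hk⟩ := hpow i
      obtain ⟨l, hl⟩ := hpow j
      exact myeq_of_powers hz1 hk hl
    have hallcomm : ∀ g h : FreeGroup J, Commute g h := by
      by_cases hJne : Nonempty J
      · obtain ⟨j₀⟩ := hJne
        have hrep : ∀ g : FreeGroup J, ∃ k : ℤ, g = FreeGroup.of j₀ ^ k := by
          intro g
          induction g with
          | C1 => exact ⟨0, by rw [zpow_zero]⟩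
          | of x => exact ⟨1, by rw [zpow_one]; rw [hsing x j₀]⟩
          | inv_of x _ =>
            refine ⟨-1, ?_⟩
            rw [hsing x j₀]
            rw [zpow_neg, zpow_one]
          | mul x y hx hy =>
            obtain ⟨k, hk⟩ := hx
            obtain ⟨l, hl⟩ := hy
            exact ⟨k + l, by rw [hk, hl, zpow_add]⟩
        intro g h
        obtain ⟨k, hk⟩ := hrep g
        obtain ⟨l, hl⟩ := hrep h
        rw [hk, hl]
        exact (Commute.refl _).zpow_zpow k l
      · intro g h
        rw [myall_one hJne g, myall_one hJne h]
    have hu0 : u ∈ K := hmem u hu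
    have hw0 : w ∈ K := hmem w hw
    have : Commute (⟨u, hu0⟩ : ↥K) ⟨w, hw0⟩ := by
      have := hallcomm (e ⟨u, hu0⟩) (e ⟨w, hw0⟩)
      have h2 : e ((⟨u, hu0⟩ : ↥K) * ⟨w, hw0⟩) = e ((⟨w, hw0⟩ : ↥K) * ⟨u, hu0⟩) := by
        rw [_root_.map_mul, _root_.map_mul]
        exact this.eq
      exact e.injective h2
    have := congrArg (Subtype.val) this.eq
    exact (by simpa using this : u * w = w * u)
  · intro n hn
    by_cases hJne : Nonempty J
    · obtain ⟨j₀⟩ := hJne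
      obtain ⟨k, hk⟩ := hpow j₀
      have hk0 : k ≠ 0 := by rintro rfl; rw [zpow_zero] at hk; exact hz1 hk
      have hzn : z ^ n = 1 := by
        have hv0n : v₀ ^ n = 1 := Subtype.ext (by simp only [SubgroupClass.coe_zpow, OneMemClass.coe_one]; exact hn)
        rw [hz, ← _root_.map_zpow, hv0n, _root_.map_one]
      rw [hk, ← zpow_mul] at hzn
      have hlift : (FreeGroup.lift fun _ : J => Multiplicative.ofAdd (1 : ℤ)) (FreeGroup.of j₀ ^ (k * n)) = 1 := by
        rw [hzn, _root_.map_one]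
      rw [_root_.map_zpow, FreeGroup.lift_apply_of] at hlift
      have h0 : k * n = 0 := by
        have h1 := congrArg Multiplicative.toAdd hlift
        simpa [toAdd_zpow] using h1
      rcases mul_eq_zero.mp h0 with h | h
      · exact absurd h hk0
      · exact h
    · exact absurd (myall_one hJne z) hz1

section Glevel

variable {G : Type*} [Group G]

lemma myG_torsionfree (hfrf : FullyResiduallyFree G) {g : G} (hg : g ≠ 1) {n : ℤ}
    (hn : g ^ n = 1) : n = 0 := by
  classical
  obtain ⟨h, hh⟩ := hfrf {g} (by simp [Ne.symm hg])
  have h1 : h g ≠ 1 := hh g (Finset.mem_singleton_self g)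
  have h2 : (h g) ^ n = 1 := by rw [← _root_.map_zpow, hn, _root_.map_one]
  exact (mykey (h g) h1).2 n h2

lemma myG_commtrans (hfrf : FullyResiduallyFree G) {u v w : G} (hv : v ≠ 1)
    (h1 : Commute v u) (h2 : Commute v w) : Commute u w := by
  classical
  by_contra hc
  have hq : (u * w) * (w * u)⁻¹ ≠ 1 := by
    intro h
    exact hc (mul_inv_eq_one.mp h)
  obtain ⟨h, hh⟩ := hfrf {v, (u * w) * (w * u)⁻¹} (by
    simp only [Finset.mem_insert, Finset.mem_singleton]
    rintro (h | h)
    · exact hv h.symm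
    · exact hq h.symm)
  have hv' : h v ≠ 1 := hh v (by simp)
  have hq' : h ((u * w) * (w * u)⁻¹) ≠ 1 := hh _ (by simp)
  have hcom : Commute (h u) (h w) :=
    (mykey (h v) hv').1 (h u) (h w) (h1.map h) (h2.map h)
  apply hq'
  rw [_root_.map_mul, _root_.map_inv, _root_.map_mul, _root_.map_mul, hcom.eq,
    mul_inv_cancel]

lemma mycommonroot (hfrf : FullyResiduallyFree G) {c d : G} (hcomm : Commute c d)
    {m n : ℤ} (hm : m ≠ 0) (hn : n ≠ 0) (hrel : c ^ m = d ^ n) :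
    ∃ (z : G) (p q : ℤ), c = z ^ p ∧ d = z ^ q := by
  classical
  set H := Subgroup.closure ({c, d} : Set G) with hH
  have hc : c ∈ H := Subgroup.subset_closure (by simp)
  have hd : d ∈ H := Subgroup.subset_closure (by simp)
  have step1 : ∀ g ∈ H, Commute c g ∧ Commute d g := by
    intro g hg
    induction hg using Subgroup.closure_induction with
    | mem x hx =>
      rcases hx with h | h
      · rw [h]; exact ⟨Commute.refl c, hcomm.symm⟩
      · rw [Set.mem_singleton_iff] at h; rw [h]; exact ⟨hcomm, Commute.refl d⟩
    | one => exact ⟨Commute.one_right c, Commute.one_right d⟩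
    | mul x y hx hy ihx ihy => exact ⟨ihx.1.mul_right ihy.1, ihx.2.mul_right ihy.2⟩
    | inv x hx ih => exact ⟨ih.1.inv_right, ih.2.inv_right⟩
  have step2 : ∀ g ∈ H, ∀ k ∈ H, Commute g k := by
    intro g hg k hk
    induction hg using Subgroup.closure_induction with
    | mem x hx =>
      rcases hx with h | h
      · rw [h]; exact (step1 k hk).1
      · rw [Set.mem_singleton_iff] at h; rw [h]; exact (step1 k hk).2
    | one => exact Commute.one_left k
    | mul x y hx hy ihx ihy => exact ihx.mul_left ihy
    | inv x hx ih => exact ih.inv_left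
  letI : CommGroup ↥H :=
    { (inferInstance : Group ↥H) with
      mul_comm := fun x y => Subtype.ext (step2 x.1 x.2 y.1 y.2).eq }
  have hHfg : H.FG := ⟨{c, d}, by rw [hH]; congr 1; simp⟩
  haveI : Module.Finite ℤ (Additive ↥H) :=
    Module.Finite.iff_addGroup_fg.mpr
      (GroupFG.iff_add_fg.mp ((Group.fg_iff_subgroup_fg H).mpr hHfg))
  haveI : NoZeroSMulDivisors ℤ (Additive ↥H) := by
    constructor
    intro k x hkx
    by_cases hx : x = 0
    · exact Or.inr hx
    · left
      have h1 : (Additive.toMul x) ^ k = 1 := by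
        have := congrArg Additive.toMul hkx
        simpa [toMul_zsmul] using this
      have h2 : ((Additive.toMul x : ↥H) : G) ^ k = 1 := by
        have := congrArg (Subtype.val) h1
        simpa using this
      have h3 : ((Additive.toMul x : ↥H) : G) ≠ 1 := by
        intro h
        exact hx (by simpa [Subtype.ext_iff] using h : Additive.toMul x = (1 : ↥H))
      exact myG_torsionfree hfrf h3 h2
  haveI : Module.Free ℤ (Additive ↥H) := Module.free_of_finite_type_torsion_free'
  set φ := (Module.Free.chooseBasis ℤ (Additive ↥H)).repr with hφ
  set C := φ (Additive.ofMul (⟨c, hc⟩ : ↥H)) with hC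
  set D := φ (Additive.ofMul (⟨d, hd⟩ : ↥H)) with hD
  have hrelH : (⟨c, hc⟩ : ↥H) ^ m = (⟨d, hd⟩ : ↥H) ^ n := by
    apply Subtype.ext; simpa using hrel
  have hsm : m • C = n • D := by
    have e1 : φ (Additive.ofMul ((⟨c, hc⟩ : ↥H) ^ m)) = m • C := by
      rw [ofMul_zpow, map_smul, hC]
    have e2 : φ (Additive.ofMul ((⟨d, hd⟩ : ↥H) ^ n)) = n • D := by
      rw [ofMul_zpow, map_smul, hD]
    rw [← e1, ← e2, hrelH]
  -- gcd step
  set g : ℤ := (Int.gcd m n : ℤ) with hg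
  have hgne : g ≠ 0 := by
    simp only [hg, ne_eq, Int.natCast_eq_zero, Int.gcd_eq_zero_iff, not_and_or]
    exact Or.inl hm
  set m₁ := m / g with hm₁
  set n₁ := n / g with hn₁
  have hmg : g * m₁ = m := Int.mul_ediv_cancel' (Int.gcd_dvd_left m n)
  have hng : g * n₁ = n := Int.mul_ediv_cancel' (Int.gcd_dvd_right m n)
  have hcop : IsCoprime m₁ n₁ := by
    rw [Int.isCoprime_iff_gcd_eq_one]
    apply Int.gcd_div_gcd_div_gcd
    have : Int.gcd m n ≠ 0 := by
      rw [ne_eq, Int.gcd_eq_zero_iff, not_and_or]; exact Or.inl hm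
    omega
  have hn1 : n₁ ≠ 0 := by
    intro h
    rw [h, mul_zero] at hng
    exact hn hng.symm
  have key : ∀ i, m₁ * C i = n₁ * D i := by
    intro i
    have h1 : (m • C) i = (n • D) i := by rw [hsm]
    simp only [Finsupp.coe_smul, Pi.smul_apply, smul_eq_mul] at h1
    apply mul_left_cancel₀ hgne
    rw [← mul_assoc, ← mul_assoc, hmg, hng]
    exact h1
  have hdvd : ∀ i, n₁ ∣ C i := by
    intro i
    have h1 : n₁ ∣ m₁ * C i := ⟨D i, key i⟩
    exact (hcop.symm).dvd_of_dvd_mul_left h1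
  set E : _ →₀ ℤ := Finsupp.mapRange (fun t => t / n₁) (by simp) C with hE
  have hCE : C = n₁ • E := by
    ext i
    simp only [hE, Finsupp.coe_smul, Pi.smul_apply, smul_eq_mul, Finsupp.mapRange_apply]
    exact (Int.mul_ediv_cancel' (hdvd i)).symm
  have hDE : D = m₁ • E := by
    ext i
    simp only [hE, Finsupp.coe_smul, Pi.smul_apply, smul_eq_mul, Finsupp.mapRange_apply]
    apply mul_left_cancel₀ hn1
    rw [← key i, mul_left_comm, Int.mul_ediv_cancel' (hdvd i)]
  set z₀ : ↥H := Additive.toMul (φ.symm E) with hz₀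
  have hcz : (⟨c, hc⟩ : ↥H) = z₀ ^ n₁ := by
    have h1 : φ.symm C = n₁ • φ.symm E := by rw [hCE, map_smul]
    rw [hC] at h1
    rw [LinearEquiv.symm_apply_apply] at h1
    have := congrArg Additive.toMul h1
    simpa [toMul_zsmul] using this
  have hdz : (⟨d, hd⟩ : ↥H) = z₀ ^ m₁ := by
    have h1 : φ.symm D = m₁ • φ.symm E := by rw [hDE, map_smul]
    rw [hD] at h1
    rw [LinearEquiv.symm_apply_apply] at h1
    have := congrArg Additive.toMul h1
    simpa [toMul_zsmul] using this
  refine ⟨(z₀ : G), n₁, m₁, ?_, ?_⟩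
  · have := congrArg (Subtype.val) hcz
    simpa using this
  · have := congrArg (Subtype.val) hdz
    simpa using this

end Glevel

/-- In a limit group with no `ℤ × ℤ` subgroup, conjugates of the cyclic subgroups
generated by two non-proper-power elements that are conjugate to neither each other
nor each other's inverses intersect trivially. -/
theorem conjugates_of_distinct_maximal_cyclic_trivial_intersection
    (G : Type*) [Group G]
    (hfg : Group.FG G) (hfrf : FullyResiduallyFree G)
    (hnoZ2 : ∀ H : Subgroup G, ¬ Nonempty (H ≃* (ℤ × ℤ)))
    (a b : G) (ha : a ≠ 1) (hb : b ≠ 1)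
    (hanp : ∀ (x : G) (n : ℤ), a = x ^ n → n = 1 ∨ n = -1)
    (hbnp : ∀ (x : G) (n : ℤ), b = x ^ n → n = 1 ∨ n = -1)
    (hconj : ¬ IsConj a b) (hconjinv : ¬ IsConj a b⁻¹) :
    ∀ x y : G,
      (Subgroup.zpowers a).map (MulAut.conj x⁻¹).toMonoidHom ⊓
        (Subgroup.zpowers b).map (MulAut.conj y⁻¹).toMonoidHom = ⊥ := by
  intro x y
  rw [Subgroup.eq_bot_iff_forall]
  intro w hw
  by_contra hw1
  obtain ⟨hw1', hw2'⟩ := Subgroup.mem_inf.mp hw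
  obtain ⟨u1, hu1, hxu1⟩ := Subgroup.mem_map.mp hw1'
  obtain ⟨u2, hu2, hyu2⟩ := Subgroup.mem_map.mp hw2'
  obtain ⟨m, hm⟩ := Subgroup.mem_zpowers_iff.mp hu1
  obtain ⟨n, hn⟩ := Subgroup.mem_zpowers_iff.mp hu2
  set c : G := (MulAut.conj x⁻¹) a with hc
  set d : G := (MulAut.conj y⁻¹) b with hd
  have hwc : w = c ^ m := by
    rw [← hxu1, ← hm, hc, ← _root_.map_zpow]
    rfl
  have hwd : w = d ^ n := by
    rw [← hyu2, ← hn, hd, ← _root_.map_zpow]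
    rfl
  have hm0 : m ≠ 0 := by
    rintro rfl
    rw [zpow_zero] at hwc
    exact hw1 hwc
  have hn0 : n ≠ 0 := by
    rintro rfl
    rw [zpow_zero] at hwd
    exact hw1 hwd
  have hcd : Commute c d := by
    refine myG_commtrans hfrf hw1 ?_ ?_
    · rw [hwc]; exact ((Commute.refl c).zpow_left m)
    · rw [hwd]; exact ((Commute.refl d).zpow_left n)
  obtain ⟨z, p, q, hcz, hdz⟩ :=
    mycommonroot hfrf hcd hm0 hn0 (by rw [← hwc, ← hwd])
  have hca : a = (x * z * x⁻¹) ^ p := by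
    have h1 : a = x * c * x⁻¹ := by rw [hc]; simp [MulAut.conj_apply]; group
    rw [h1, hcz, conj_zpow]
  have hdb : b = (y * z * y⁻¹) ^ q := by
    have h1 : b = y * d * y⁻¹ := by rw [hd]; simp [MulAut.conj_apply]; group
    rw [h1, hdz, conj_zpow]
  have hp := hanp _ p hca
  have hq := hbnp _ q hdb
  have hcexp : c = x⁻¹ * a * x := by rw [hc]; simp [MulAut.conj_apply]
  have hdexp : d = y⁻¹ * b * y := by rw [hd]; simp [MulAut.conj_apply]
  have hfinal : c = d ∨ c = d⁻¹ := by
    rcases hp with hp | hp <;> rcases hq with hq | hq <;>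
      rw [hp] at hcz <;> rw [hq] at hdz
    · left; rw [hcz, hdz]
    · right; rw [hcz, hdz]; group
    · right; rw [hcz, hdz]; group
    · left; rw [hcz, hdz]
  rcases hfinal with h | h
  · apply hconj
    rw [isConj_iff]
    refine ⟨y * x⁻¹, ?_⟩
    have : x⁻¹ * a * x = y⁻¹ * b * y := by rw [← hcexp, ← hdexp, h]
    have hb' : b = y * (x⁻¹ * a * x) * y⁻¹ := by rw [this]; group
    rw [hb']; group
  · apply hconjinv
    rw [isConj_iff]
    refine ⟨y * x⁻¹, ?_⟩
    have : x⁻¹ * a * x = (y⁻¹ * b * y)⁻¹ := by rw [← hcexp, ← hdexp, h]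
    have hb' : b⁻¹ = y * (x⁻¹ * a * x) * y⁻¹ := by rw [this]; group
    rw [hb']; group
end
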